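/- Let φ : ℝ → ℝ be supported in {t : 1/2 ≤ |t| ≤ 2} with 0 ≤ φ ≤ 1, and let γ satisfy γ(t)/t strictly increasing on (0,∞), 1 + 1/(2C₂) ≤ tγ'(t)/γ(t) ≤ 1 + 2/C₁, and 2^{1+1/(4C₂)} ≤ γ(2t)/γ(t) on (0,∞), where 0 < C₁ ≤ C₂. Then there is a constant C depending only on C₁, C₂ such that for all n ∈ ℤ with n ≤ 0 and all k ∈ ℤ, the sum over j ∈ ℤ of φ(γ'(2^{-j})/2^{n+j−k}) is at most C. -/

import Mathlib

open Set

theorem stmt8 (C₁ C₂ : ℝ) (hC₁ : 0 < C₁) (hC₁₂ : C₁ ≤ C₂) :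
    ∃ C > (0:ℝ), ∀ (φ γ : ℝ → ℝ),
      (∀ t, φ t ≠ 0 → 1/2 ≤ |t| ∧ |t| ≤ 2) →
      (∀ t, 0 ≤ φ t ∧ φ t ≤ 1) →
      ContDiff ℝ 3 γ → γ 0 = 0 → deriv γ 0 = 0 →
      (∀ t ∈ Ioi (0:ℝ), 0 < deriv γ t) →
      (∀ t ∈ Ioi (0:ℝ), 0 < deriv (deriv γ) t) →
      StrictMonoOn (fun t => γ t / t) (Ioi 0) →
      (∀ t ∈ Ioi (0:ℝ),
        1 + 1 / (2 * C₂) ≤ t * deriv γ t / γ t ∧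
        t * deriv γ t / γ t ≤ 1 + 2 / C₁) →
      (∀ t ∈ Ioi (0:ℝ), (2:ℝ) ^ (1 + 1 / (4 * C₂)) ≤ γ (2 * t) / γ t) →
      ∀ n : ℤ, n ≤ 0 → ∀ k : ℤ,
        ∑' j : ℤ, φ (deriv γ ((2:ℝ) ^ (-j)) / (2:ℝ) ^ (n + j - k)) ≤ C := by
  have hC₂ : 0 < C₂ := lt_of_lt_of_le hC₁ hC₁₂
  set a : ℝ := 1 + 1 / (2 * C₂) with ha_def
  set b : ℝ := 1 + 2 / C₁ with hb_def
  set δ : ℝ := 1 / (4 * C₂) with hδ_def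
  have ha : 0 < a := by positivity
  have hb : 0 < b := by positivity
  have hδ : 0 < δ := by positivity
  have hbase : 1 < (2:ℝ) ^ δ :=
    (Real.one_lt_rpow_iff_of_pos (by norm_num)).mpr (Or.inl ⟨one_lt_two, hδ⟩)
  obtain ⟨m, hm⟩ : ∃ m : ℕ, 8 * b ≤ a * ((2:ℝ) ^ δ) ^ m := by
    obtain ⟨m, hm⟩ := pow_unbounded_of_one_lt (8 * b / a) hbase
    refine ⟨m, ?_⟩
    rw [div_lt_iff₀ ha] at hm
    nlinarith
  refine ⟨2 * m + 1, by positivity, ?_⟩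
  intro φ γ hsupp hφ hγ3 hγ0 hγ'0 hγ' hγ'' hmono hratio hdbl n hn k
  -- positivity of γ on (0,∞)
  have hγmono : StrictMonoOn γ (Ici 0) := by
    apply strictMonoOn_of_deriv_pos (convex_Ici 0) hγ3.continuous.continuousOn
    intro x hx
    rw [interior_Ici] at hx
    exact hγ' x hx
  have hγpos : ∀ t : ℝ, 0 < t → 0 < γ t := by
    intro t ht
    have := hγmono (Set.mem_Ici.mpr le_rfl) (le_of_lt ht : (0:ℝ) ≤ t) ht
    rwa [hγ0] at this
  -- lemma A
  have hA : ∀ t : ℝ, 0 < t → a * γ t ≤ t * deriv γ t ∧ t * deriv γ t ≤ b * γ t := by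
    intro t ht
    obtain ⟨h1, h2⟩ := hratio t ht
    have hγt := hγpos t ht
    constructor
    · rw [le_div_iff₀ hγt] at h1; linarith
    · rw [div_le_iff₀ hγt] at h2; linarith
  -- lemma B (doubling)
  have hB : ∀ t : ℝ, 0 < t → (2:ℝ) ^ ((1:ℝ) + δ) * γ t ≤ γ (2 * t) := by
    intro t ht
    have := hdbl t ht
    rw [le_div_iff₀ (hγpos t ht)] at this
    exact this
  have hEpos : 0 < (2:ℝ) ^ ((1:ℝ) + δ) := Real.rpow_pos_of_pos two_pos _
  -- iterated doubling
  have hC : ∀ (j : ℤ) (d : ℕ),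
      ((2:ℝ) ^ ((1:ℝ) + δ)) ^ d * γ ((2:ℝ) ^ (-j - (d:ℤ))) ≤ γ ((2:ℝ) ^ (-j)) := by
    intro j d
    induction d with
    | zero => simp
    | succ d ih =>
      have ht : (0:ℝ) < (2:ℝ) ^ (-j - ((d:ℤ) + 1)) := zpow_pos two_pos _
      have hstep := hB _ ht
      have h2 : (2:ℝ) * (2:ℝ) ^ (-j - ((d:ℤ) + 1)) = (2:ℝ) ^ (-j - (d:ℤ)) := by
        rw [mul_comm, ← zpow_add_one₀ (two_ne_zero)]
        ring_nf
      rw [h2] at hstep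
      have hγd : 0 < γ ((2:ℝ) ^ (-j - ((d:ℤ) + 1))) := hγpos _ ht
      calc ((2:ℝ) ^ ((1:ℝ) + δ)) ^ (d + 1) * γ ((2:ℝ) ^ (-j - ((d:ℕ) + 1 : ℤ)))
          = ((2:ℝ) ^ ((1:ℝ) + δ)) ^ d *
            ((2:ℝ) ^ ((1:ℝ) + δ) * γ ((2:ℝ) ^ (-j - ((d:ℤ) + 1)))) := by
            push_cast; ring
        _ ≤ ((2:ℝ) ^ ((1:ℝ) + δ)) ^ d * γ ((2:ℝ) ^ (-j - (d:ℤ))) := by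
            apply mul_le_mul_of_nonneg_left hstep (by positivity)
        _ ≤ γ ((2:ℝ) ^ (-j)) := ih
  -- support bounds
  set P : ℝ := (2:ℝ) ^ (n - k) with hP_def
  have hPpos : 0 < P := zpow_pos two_pos _
  set g : ℤ → ℝ := fun j => deriv γ ((2:ℝ) ^ (-j)) * (2:ℝ) ^ (-j) with hg_def
  have hgpos : ∀ j : ℤ, 0 < g j := fun j =>
    mul_pos (hγ' _ (show (0:ℝ) < (2:ℝ) ^ (-j) from zpow_pos two_pos _)) (zpow_pos two_pos _)
  have hkey : ∀ j : ℤ, φ (deriv γ ((2:ℝ) ^ (-j)) / (2:ℝ) ^ (n + j - k)) ≠ 0 →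
      P ≤ 2 * g j ∧ g j ≤ 2 * P := by
    intro j hj
    obtain ⟨h1, h2⟩ := hsupp _ hj
    have hD : (0:ℝ) < (2:ℝ) ^ (n + j - k) := zpow_pos two_pos _
    have hN : (0:ℝ) < deriv γ ((2:ℝ) ^ (-j)) := hγ' _ (show (0:ℝ) < (2:ℝ) ^ (-j) from zpow_pos two_pos _)
    have hx : 0 < deriv γ ((2:ℝ) ^ (-j)) / (2:ℝ) ^ (n + j - k) := div_pos hN hD
    rw [abs_of_pos hx] at h1 h2
    rw [le_div_iff₀ hD] at h1
    rw [div_le_iff₀ hD] at h2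
    have hprod : (2:ℝ) ^ (n + j - k) * (2:ℝ) ^ (-j) = P := by
      rw [← zpow_add₀ (two_ne_zero : (2:ℝ) ≠ 0)]
      congr 1; ring
    have hzj : (0:ℝ) < (2:ℝ) ^ (-j) := zpow_pos two_pos _
    constructor
    · have := mul_le_mul_of_nonneg_right h1 hzj.le
      rw [mul_assoc] at this
      rw [hprod] at this
      simp only [hg_def]
      linarith
    · have := mul_le_mul_of_nonneg_right h2 hzj.le
      rw [mul_assoc, hprod] at this
      simp only [hg_def]
      linarith
  -- separation claim
  have hsep : ∀ j j' : ℤ, φ (deriv γ ((2:ℝ) ^ (-j)) / (2:ℝ) ^ (n + j - k)) ≠ 0 →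
      φ (deriv γ ((2:ℝ) ^ (-j')) / (2:ℝ) ^ (n + j' - k)) ≠ 0 → j' < j + m := by
    intro j j' hj hj'
    by_contra hlt
    push_neg at hlt
    set d : ℕ := (j' - j).toNat with hd_def
    have hdz : (d : ℤ) = j' - j := Int.toNat_of_nonneg (by omega)
    have hdm : m ≤ d := by omega
    have hiter := hC j d
    have hjj' : -j - (d:ℤ) = -j' := by omega
    rw [hjj'] at hiter
    obtain ⟨hk1, hk2⟩ := hkey j hj
    obtain ⟨hk1', hk2'⟩ := hkey j' hj'
    have hAj := (hA _ (zpow_pos two_pos (-j))).1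
    have hAj' := (hA _ (zpow_pos two_pos (-j'))).2
    have hgj : a * γ ((2:ℝ) ^ (-j)) ≤ g j := by
      simp only [hg_def]; rw [mul_comm (deriv γ _)]; exact hAj
    have hgj' : g j' ≤ b * γ ((2:ℝ) ^ (-j')) := by
      simp only [hg_def]; rw [mul_comm (deriv γ _)]; exact hAj'
    have hG' : 0 < γ ((2:ℝ) ^ (-j')) := hγpos _ (zpow_pos two_pos _)
    -- pow chain
    have hch : ((2:ℝ) ^ δ) ^ m ≤ ((2:ℝ) ^ ((1:ℝ) + δ)) ^ d := by
      calc ((2:ℝ) ^ δ) ^ m ≤ ((2:ℝ) ^ δ) ^ d := pow_le_pow_right₀ hbase.le hdm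
        _ ≤ ((2:ℝ) ^ ((1:ℝ) + δ)) ^ d := by
            apply pow_le_pow_left₀ (Real.rpow_nonneg (by norm_num) _)
            exact (Real.rpow_le_rpow_left_iff one_lt_two).mpr (by linarith)
    set E : ℝ := ((2:ℝ) ^ ((1:ℝ) + δ)) ^ d with hE_def
    have hE0 : 0 < E := by positivity
    have e2 : 8 * b ≤ a * E :=
      le_trans hm (mul_le_mul_of_nonneg_left hch ha.le)
    have e3 : a * E * γ ((2:ℝ) ^ (-j')) ≤ a * γ ((2:ℝ) ^ (-j)) := by
      rw [mul_assoc]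
      exact mul_le_mul_of_nonneg_left hiter ha.le
    have e4 : a * E * γ ((2:ℝ) ^ (-j')) ≤ 2 * P := le_trans e3 (by linarith)
    have e5 : 8 * b * γ ((2:ℝ) ^ (-j')) ≤ a * E * γ ((2:ℝ) ^ (-j')) :=
      mul_le_mul_of_nonneg_right e2 hG'.le
    have e6 : P ≤ 2 * (b * γ ((2:ℝ) ^ (-j'))) := by linarith
    nlinarith
  -- finish
  by_cases hS : ∃ j₀ : ℤ, φ (deriv γ ((2:ℝ) ^ (-j₀)) / (2:ℝ) ^ (n + j₀ - k)) ≠ 0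
  · obtain ⟨j₀, hj₀⟩ := hS
    set s : Finset ℤ := Finset.Icc (j₀ - m) (j₀ + m) with hs_def
    have h0 : ∀ j ∉ s, φ (deriv γ ((2:ℝ) ^ (-j)) / (2:ℝ) ^ (n + j - k)) = 0 := by
      intro j hjs
      by_contra h
      have h1 := hsep j₀ j hj₀ h
      have h2 := hsep j j₀ h hj₀
      apply hjs
      rw [hs_def, Finset.mem_Icc]
      omega
    rw [tsum_eq_sum h0]
    calc ∑ j ∈ s, φ (deriv γ ((2:ℝ) ^ (-j)) / (2:ℝ) ^ (n + j - k))
        ≤ ∑ _j ∈ s, (1:ℝ) := Finset.sum_le_sum (fun j _ => (hφ _).2)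
      _ = s.card := by simp
      _ ≤ 2 * m + 1 := by
          rw [hs_def, Int.card_Icc]
          have : (j₀ + (m:ℤ) + 1 - (j₀ - m)).toNat = 2 * m + 1 := by omega
          rw [this]
          push_cast
          norm_num
  · push_neg at hS
    calc ∑' j : ℤ, φ (deriv γ ((2:ℝ) ^ (-j)) / (2:ℝ) ^ (n + j - k))
        = ∑' _j : ℤ, (0:ℝ) := tsum_congr hS
      _ = 0 := tsum_zero
      _ ≤ 2 * m + 1 := by positivity
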